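/- The set of graded gentle trees with n vertices is closed under forward and backward mutation: for any graded gentle tree G with n vertices and any vertex V, both μ_V(G) and μ_V^{-1}(G) are again graded gentle trees with n vertices. -/

import Mathlib

open CategoryTheory

/-- A graded 2-colored quiver on vertex set `Fin n`: a set of arrows, where an arrow
is a triple (source, target, color), together with a grading (degree) function on arrows. -/
structure GCQuiver (n : ℕ) where
  arr : Set (Fin n × Fin n × Bool)
  deg : Fin n × Fin n × Bool → ℕ

namespace GCQuiver

variable {n : ℕ}

/-- The underlying (undirected, uncolored) simple graph of a graded colored quiver. -/
def adj (G : GCQuiver n) : SimpleGraph (Fin n) where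
  Adj i j := i ≠ j ∧ ∃ c, ((i, j, c) ∈ G.arr ∨ (j, i, c) ∈ G.arr)
  symm := by
    constructor
    intro i j h
    exact ⟨Ne.symm h.1, by obtain ⟨c, hc⟩ := h.2; exact ⟨c, hc.symm⟩⟩
  loopless := by constructor; intro i h; exact h.1 rfl

/-- A graded gentle tree: the underlying graph is a tree (in particular there is
at most one arrow between any two vertices, which is forced by `tree` together with
`card_arr`), each vertex has at most one incoming and at most one outgoing arrow of
each color, and all degrees of arrows are positive. -/
structure IsGGTree (G : GCQuiver n) : Prop where
  no_loop : ∀ i c, (i, i, c) ∉ G.arr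
  tree : G.adj.IsTree
  card_arr : G.arr.ncard = n - 1
  out_unique : ∀ i c j j', (i, j, c) ∈ G.arr → (i, j', c) ∈ G.arr → j = j'
  in_unique : ∀ j c i i', (i, j, c) ∈ G.arr → (i', j, c) ∈ G.arr → i = i'
  deg_pos : ∀ a ∈ G.arr, 1 ≤ G.deg a

/-- Monochromatic (unicolored) directed paths in a graded colored quiver:
`MonoPath G i j c d` holds iff there is a directed path from `i` to `j` all of whose
arrows have color `c`, of total grading `d`. -/
inductive MonoPath (G : GCQuiver n) : Fin n → Fin n → Bool → ℕ → Prop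
  | single {i j : Fin n} {c : Bool} (h : (i, j, c) ∈ G.arr) :
      MonoPath G i j c (G.deg (i, j, c))
  | cons {i j l : Fin n} {c : Bool} {d : ℕ} (h : (i, j, c) ∈ G.arr)
      (p : MonoPath G j l c d) : MonoPath G i l c (G.deg (i, j, c) + d)

/-- The associated (positively) graded quiver of a graded gentle tree: it has an arrow
`i → j` of degree `d` iff there is a monochromatic directed path `i → j` of total
grading `d`.  (In a gentle tree there is at most one such path between any two
vertices, so recording existence records the quiver faithfully.) -/
def assocQuiver (G : GCQuiver n) : Fin n → Fin n → ℕ → Prop :=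
  fun i j d => ∃ c, MonoPath G i j c d

end GCQuiver

namespace GCQuiver

variable {n : ℕ}

/-- `re G V c w` : the forward mutation of `G` at `V` involves a reattachment for the
color pair headed by the incoming arrow of color `c`, which is the degree-one arrow
`w → V`. -/
def re (G : GCQuiver n) (V : Fin n) (c : Bool) (w : Fin n) : Prop :=
  (w, V, c) ∈ G.arr ∧ G.deg (w, V, c) = 1

/-- Adjacency in the underlying graph of `G`, avoiding the edge `{w, V}` as well as the
edge supporting the incoming arrow of color `c` at `w` (the `L₁`-arrow). -/
def adjAvoid (G : GCQuiver n) (V w : Fin n) (c : Bool) (a b : Fin n) : Prop :=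
  (∃ d, (a, b, d) ∈ G.arr ∨ (b, a, d) ∈ G.arr) ∧
  ¬(a = w ∧ b = V) ∧ ¬(a = V ∧ b = w) ∧
  ¬((a, b, c) ∈ G.arr ∧ b = w) ∧ ¬((b, a, c) ∈ G.arr ∧ a = w)

/-- The region (set of vertices) on which colors are swapped during the reattachment
at `(c, w)`: the connected component of `w` after removing the mutated degree-one arrow
`w → V` and the incoming arrow of color `c` at `w`; this is `{w} ∪ E₁ ∪ E₂` in the
notation of the paper. -/
def swapRegion (G : GCQuiver n) (V w : Fin n) (c : Bool) : Set (Fin n) :=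
  {u | Relation.ReflTransGen (adjAvoid G V w c) w u}

/-- The arrows between two vertices `a`, `b` get their color flipped by the forward
mutation at `V` iff both `a` and `b` belong to a swap region of a reattachment. -/
def flips (G : GCQuiver n) (V : Fin n) (a b : Fin n) : Prop :=
  ∃ c w, re G V c w ∧ a ∈ swapRegion G V w c ∧ b ∈ swapRegion G V w c

open Classical in
/-- The forward mutation `μ_V` of a graded (2-)colored quiver at the vertex `V`,
following rule (2.1) of the paper and its mirror rule, simultaneously for both
color pairs at `V`:
* each incoming arrow at `V` of degree `> 1` has its degree decreased by `1`, and
  each outgoing arrow at `V` (whose color pair contains no reattachment)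
  has its degree increased by `1`;
* each incoming arrow `α : w → V` (of a color `c`) of degree `1` is reversed into an
  arrow `V → w` of degree `1` and of the other color; the outgoing arrow `V → r` of
  the other color is reattached to become `w → r` (same color, same degree); the
  incoming arrow `l → w` of color `c` is reattached to become `l → V` (same color,
  same degree); and the two remaining subtrees at `w` have all their colors swapped
  (including their connecting arrows at `w`). -/
noncomputable def mutate (G : GCQuiver n) (V : Fin n) : GCQuiver n where
  arr := {e |
    (∃ d₀, (e.1, e.2.1, d₀) ∈ G.arr ∧
       ¬(e.2.1 = V ∧ re G V d₀ e.1) ∧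
       ¬(e.1 = V ∧ ∃ w, re G V (!d₀) w) ∧
       ¬(∃ w, re G V d₀ w ∧ e.2.1 = w) ∧
       e.2.2 = (if flips G V e.1 e.2.1 then !d₀ else d₀)) ∨
    (e.1 = V ∧ re G V (!e.2.2) e.2.1) ∨
    (re G V (!e.2.2) e.1 ∧ (V, e.2.1, e.2.2) ∈ G.arr) ∨
    (e.2.1 = V ∧ ∃ w, re G V e.2.2 w ∧ (e.1, w, e.2.2) ∈ G.arr)}
  deg := fun e =>
    if e.1 = V ∧ re G V (!e.2.2) e.2.1 then 1
    else if re G V (!e.2.2) e.1 ∧ (V, e.2.1, e.2.2) ∈ G.arr then G.deg (V, e.2.1, e.2.2)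
    else if h : e.2.1 = V ∧ ∃ w, re G V e.2.2 w ∧ (e.1, w, e.2.2) ∈ G.arr then
      G.deg (e.1, h.2.choose, e.2.2)
    else if flips G V e.1 e.2.1 ∧ (e.1, e.2.1, !e.2.2) ∈ G.arr then
      G.deg (e.1, e.2.1, !e.2.2)
    else if e.2.1 = V then G.deg e - 1
    else if e.1 = V then G.deg e + 1
    else G.deg e

/-- Two graded colored quivers are the same if they have the same arrows with the
same degrees (the degree function being irrelevant away from the arrows). -/
def Same (G G' : GCQuiver n) : Prop :=
  G.arr = G'.arr ∧ ∀ a ∈ G.arr, G.deg a = G'.deg a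


end GCQuiver


namespace GCQuiver

open Classical SimpleGraph

variable {n : ℕ}

lemma same_refl (G : GCQuiver n) : G.Same G := ⟨rfl, fun _ _ => rfl⟩

lemma same_symm {G H : GCQuiver n} (h : G.Same H) : H.Same G := by
  obtain ⟨h1, h2⟩ := h
  refine ⟨h1.symm, fun a ha => ?_⟩
  rw [h2 a (h1.symm ▸ ha)]

lemma same_trans {G H K : GCQuiver n} (h : G.Same H) (h' : H.Same K) : G.Same K := by
  obtain ⟨h1, h2⟩ := h; obtain ⟨h1', h2'⟩ := h'
  exact ⟨h1.trans h1', fun a ha => (h2 a ha).trans (h2' a (h1 ▸ ha))⟩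

/-- Reversal of all arrows. -/
def rev (G : GCQuiver n) : GCQuiver n where
  arr := {e | (e.2.1, e.1, e.2.2) ∈ G.arr}
  deg := fun e => G.deg (e.2.1, e.1, e.2.2)

@[simp] lemma mem_rev {G : GCQuiver n} {a b : Fin n} {c : Bool} :
    (a, b, c) ∈ (rev G).arr ↔ (b, a, c) ∈ G.arr := Iff.rfl

@[simp] lemma deg_rev (G : GCQuiver n) (a b : Fin n) (c : Bool) :
    (rev G).deg (a, b, c) = G.deg (b, a, c) := rfl

lemma rev_rev (G : GCQuiver n) : rev (rev G) = G := rfl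

lemma adj_rev (G : GCQuiver n) : (rev G).adj = G.adj := by
  ext i j
  constructor <;> rintro ⟨hne, c, hc | hc⟩ <;> exact ⟨hne, c, by tauto⟩

lemma rev_same {G H : GCQuiver n} (h : G.Same H) : (rev G).Same (rev H) := by
  obtain ⟨h1, h2⟩ := h
  constructor
  · ext e; simp only [rev, Set.mem_setOf_eq, h1]
  · rintro ⟨a, b, c⟩ ha
    exact h2 (b, a, c) ha

lemma arr_finite (G : GCQuiver n) : G.arr.Finite := Set.toFinite _

lemma rev_isGGTree {G : GCQuiver n} (hG : G.IsGGTree) : (rev G).IsGGTree := by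
  constructor
  · intro i c h; exact hG.no_loop i c h
  · rw [adj_rev]; exact hG.tree
  · have : (rev G).arr = (fun e : Fin n × Fin n × Bool => (e.2.1, e.1, e.2.2)) '' G.arr := by
      ext ⟨a, b, c⟩
      simp only [Set.mem_image, mem_rev]
      constructor
      · intro h; exact ⟨(b, a, c), h, rfl⟩
      · rintro ⟨⟨x, y, d⟩, hx, h⟩
        obtain ⟨rfl, rfl, rfl⟩ := Prod.mk.injEq .. ▸ h
        simpa using hx
    rw [this, Set.ncard_image_of_injective _ ?_, hG.card_arr]
    rintro ⟨a, b, c⟩ ⟨a', b', c'⟩ h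
    simp only [Prod.mk.injEq] at h ⊢
    tauto
  · intro i c j j' h h'; exact hG.in_unique i c j j' h h'
  · intro j c i i' h h'; exact hG.out_unique j c i i' h h'
  · rintro ⟨a, b, c⟩ ha; exact hG.deg_pos (b, a, c) ha

/-! ### Tree infrastructure -/

/-- In a tree, every walk between adjacent vertices uses the connecting edge. -/
lemma tree_walk_edge_mem {T : SimpleGraph (Fin n)} (hT : T.IsTree) {u v : Fin n}
    (h : T.Adj u v) (p : T.Walk u v) : s(u, v) ∈ p.edges := by
  obtain ⟨q, hq, huniq⟩ := hT.existsUnique_path u v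
  have h1 : p.bypass = q := huniq _ p.bypass_isPath
  have h2 : (SimpleGraph.Walk.cons h SimpleGraph.Walk.nil) = q := by
    refine huniq _ ?_
    simp [SimpleGraph.Walk.isPath_def, h.ne]
  have : s(u, v) ∈ p.bypass.edges := by
    rw [h1, ← h2]; simp
  exact p.edges_bypass_subset this

/-- In a tree, every walk between two distinct neighbors of `V` passes through `V`. -/
lemma tree_walk_center {T : SimpleGraph (Fin n)} (hT : T.IsTree) {w w' V : Fin n}
    (h : T.Adj V w) (h' : T.Adj V w') (hne : w ≠ w') (p : T.Walk w w') :
    V ∈ p.support := by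
  by_contra hV
  have hVb : V ∉ p.bypass.support := fun hx => hV (p.support_bypass_subset hx)
  have hp1 : (SimpleGraph.Walk.cons h p.bypass).IsPath := by
    rw [SimpleGraph.Walk.cons_isPath_iff]
    exact ⟨p.bypass_isPath, hVb⟩
  have hp2 : (SimpleGraph.Walk.cons h' SimpleGraph.Walk.nil).IsPath := by
    simp [SimpleGraph.Walk.isPath_def, h'.ne]
  obtain ⟨q, hq, huniq⟩ := hT.existsUnique_path V w'
  have := (huniq _ hp1).trans (huniq _ hp2).symm
  have hw : w ∈ (SimpleGraph.Walk.cons h p.bypass).support := by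
    simp [SimpleGraph.Walk.support_cons]
  rw [this] at hw
  simp [SimpleGraph.Walk.support_cons] at hw
  rcases hw with hw | hw
  · exact h.ne' hw
  · exact hne hw

/-- Chains of a relation refining adjacency give walks with controlled edges and
support. -/
lemma reflTransGen_toWalk {T : SimpleGraph (Fin n)} {R : Fin n → Fin n → Prop}
    (hR : ∀ a b, R a b → T.Adj a b) {u v : Fin n} (h : Relation.ReflTransGen R u v) :
    ∃ p : T.Walk u v, (∀ e ∈ p.edges, ∃ a b, R a b ∧ e = s(a, b)) ∧
      (∀ x ∈ p.support, Relation.ReflTransGen R u x) := by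
  induction h with
  | refl =>
    refine ⟨SimpleGraph.Walk.nil, by simp, ?_⟩
    intro x hx; simp at hx; subst hx; exact Relation.ReflTransGen.refl
  | @tail b c hab hbc ih =>
    obtain ⟨p, hp1, hp2⟩ := ih
    refine ⟨p.concat (hR _ _ hbc), ?_, ?_⟩
    · intro e he
      rw [SimpleGraph.Walk.edges_concat] at he
      rw [List.concat_eq_append] at he
      rcases List.mem_append.mp he with he | he
      · exact hp1 e he
      · exact ⟨b, c, hbc, by simp at he; exact he⟩
    · intro x hx
      rw [SimpleGraph.Walk.support_concat] at hx
      rcases List.mem_append.mp hx with hx | hx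
      · exact hp2 x hx
      · simp at hx; subst hx; exact hab.tail hbc

end GCQuiver


namespace GCQuiver

open Classical SimpleGraph

variable {n : ℕ}

lemma tree_ncard_edgeSet {T : SimpleGraph (Fin n)} (hT : T.IsTree) :
    T.edgeSet.ncard = n - 1 := by
  haveI : Fintype T.edgeSet := (Set.toFinite T.edgeSet).fintype
  rw [Set.ncard_eq_toFinset_card']
  have h := hT.card_edgeFinset
  simp only [Fintype.card_fin] at h
  have h2 : T.edgeSet.toFinset.card = T.edgeFinset.card := rfl
  omega

lemma connected_card_le {T : SimpleGraph (Fin n)} (hc : T.Connected) :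
    n ≤ T.edgeSet.ncard + 1 := by
  rcases Nat.eq_zero_or_pos n with h0 | hpos
  · omega
  set root : Fin n := ⟨0, hpos⟩ with hroot
  have key : ∀ v : Fin n, v ≠ root → ∃ x, T.Adj x v ∧ T.dist root x < T.dist root v := by
    intro v hv
    have hr : T.Reachable root v := hc.preconnected root v
    obtain ⟨p, hp⟩ := hr.exists_walk_length_eq_dist
    have hdp : 0 < T.dist root v := hr.pos_dist_of_ne (Ne.symm hv)
    obtain ⟨x, hadj, q, hq⟩ := SimpleGraph.Walk.exists_eq_cons_of_ne hv p.reverse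
    refine ⟨x, hadj.symm, ?_⟩
    have h1 : T.dist root x ≤ q.reverse.length := SimpleGraph.dist_le _
    have h2 : q.length + 1 = p.length := by
      have := congrArg SimpleGraph.Walk.length hq
      simp only [SimpleGraph.Walk.length_reverse, SimpleGraph.Walk.length_cons] at this
      omega
    rw [SimpleGraph.Walk.length_reverse] at h1
    omega
  choose f hf1 hf2 using key
  have hle : (Set.univ \ {root} : Set (Fin n)).ncard ≤ T.edgeSet.ncard := by
    apply Set.ncard_le_ncard_of_injOn
      (fun v => if h : v ≠ root then s(f v h, v) else s(root, root))
    · intro v hv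
      have hv' : v ≠ root := by simpa using hv.2
      simp only [dif_pos hv']
      exact (T.mem_edgeSet).mpr (hf1 v hv')
    · intro a ha b hb hab
      have ha' : a ≠ root := by simpa using ha.2
      have hb' : b ≠ root := by simpa using hb.2
      simp only [dif_pos ha', dif_pos hb'] at hab
      rcases Sym2.eq_iff.mp hab with ⟨h1, h2⟩ | ⟨h1, h2⟩
      · exact h2
      · exfalso
        have d1 := hf2 a ha'
        have d2 := hf2 b hb'
        rw [h1] at d1; rw [← h2] at d2
        omega
  have hcard : (Set.univ \ {root} : Set (Fin n)).ncard = n - 1 := by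
    rw [Set.ncard_diff (by simp) (Set.toFinite _)]
    simp [Set.ncard_univ]
  omega

lemma delete_edge_connected {T : SimpleGraph (Fin n)} (hc : T.Connected) {v w : Fin n}
    (hre : (T \ SimpleGraph.fromEdgeSet {s(v, w)}).Reachable v w) :
    (T.deleteEdges {s(v, w)}).Connected := by
  have hpre : ∀ a b, T.Adj a b → (T.deleteEdges {s(v, w)}).Reachable a b := by
    intro a b hab
    by_cases he : s(a, b) = s(v, w)
    · rcases Sym2.eq_iff.mp he with ⟨rfl, rfl⟩ | ⟨rfl, rfl⟩
      · exact hre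
      · exact hre.symm
    · apply SimpleGraph.Adj.reachable
      have : (T.deleteEdges {s(v, w)}).Adj a b := by
        rw [SimpleGraph.deleteEdges_adj]
        exact ⟨hab, by simpa using he⟩
      exact this
  rw [SimpleGraph.connected_iff]
  refine ⟨?_, hc.nonempty⟩
  · intro a b
    have hr := hc.preconnected a b
    rw [SimpleGraph.reachable_iff_reflTransGen] at hr
    induction hr with
    | refl => exact SimpleGraph.Reachable.refl _
    | tail h1 h2 ih => exact ih.trans (hpre _ _ h2)

lemma isTree_of_connected_card_le {T : SimpleGraph (Fin n)} (hc : T.Connected)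
    (hcard : T.edgeSet.ncard ≤ n - 1) : T.IsTree ∧ T.edgeSet.ncard = n - 1 := by
  have hn : 0 < n := Fin.pos_iff_nonempty.mpr hc.nonempty
  have hge : n ≤ T.edgeSet.ncard + 1 := connected_card_le hc
  have hcard' : T.edgeSet.ncard = n - 1 := by omega
  refine ⟨⟨hc, ?_⟩, hcard'⟩
  intro x c hcyc
  have hnil : ¬c.Nil := hcyc.not_nil
  obtain ⟨y, hadj, q, rfl⟩ := SimpleGraph.Walk.not_nil_iff.mp hnil
  have hmem : s(x, y) ∈ (SimpleGraph.Walk.cons hadj q).edges := by simp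
  have hbr := SimpleGraph.adj_and_reachable_delete_edges_iff_exists_cycle.mpr
    ⟨x, _, hcyc, hmem⟩
  have hconn' := delete_edge_connected hc hbr.2
  have hle := connected_card_le hconn'
  rw [SimpleGraph.edgeSet_deleteEdges] at hle
  have hmemE : s(x, y) ∈ T.edgeSet := (T.mem_edgeSet).mpr hbr.1
  rw [Set.ncard_diff_singleton_of_mem hmemE] at hle
  have hpos : 0 < T.edgeSet.ncard := (Set.ncard_pos (Set.toFinite _)).mpr ⟨_, hmemE⟩
  omega

/-! ### One arrow per edge -/

lemma edgeSet_eq_image {G : GCQuiver n} (hnl : ∀ i c, (i, i, c) ∉ G.arr) :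
    G.adj.edgeSet = (fun e : Fin n × Fin n × Bool => s(e.1, e.2.1)) '' G.arr := by
  ext e
  induction e with
  | _ x y =>
    simp only [SimpleGraph.mem_edgeSet, Set.mem_image]
    constructor
    · rintro ⟨hne, c, hc | hc⟩
      · exact ⟨(x, y, c), hc, rfl⟩
      · exact ⟨(y, x, c), hc, Sym2.eq_swap⟩
    · rintro ⟨⟨a, b, c⟩, hab, habe⟩
      have hne : a ≠ b := fun h => hnl a c (h ▸ hab)
      rcases Sym2.eq_iff.mp habe with ⟨rfl, rfl⟩ | ⟨rfl, rfl⟩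
      · exact ⟨hne, c, Or.inl hab⟩
      · exact ⟨hne.symm, c, Or.inr hab⟩

lemma edge_injOn {G : GCQuiver n} (hG : G.IsGGTree) :
    Set.InjOn (fun e : Fin n × Fin n × Bool => s(e.1, e.2.1)) G.arr := by
  apply Set.injOn_of_ncard_image_eq _ (Set.toFinite _)
  rw [← edgeSet_eq_image hG.no_loop, tree_ncard_edgeSet hG.tree, hG.card_arr]

lemma color_unique {G : GCQuiver n} (hG : G.IsGGTree) {a b : Fin n} {c c' : Bool}
    (h : (a, b, c) ∈ G.arr) (h' : (a, b, c') ∈ G.arr) : c = c' := by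
  have := edge_injOn hG h h' rfl
  simpa using congrArg (fun e => e.2.2) this

lemma not_opp {G : GCQuiver n} (hG : G.IsGGTree) {a b : Fin n} {c c' : Bool}
    (h : (a, b, c) ∈ G.arr) (h' : (b, a, c') ∈ G.arr) : False := by
  have := edge_injOn hG h h' Sym2.eq_swap
  have hab : a = b := congrArg (fun e => e.1) this
  exact hG.no_loop b c (hab ▸ h)

lemma arr_ne {G : GCQuiver n} (hG : G.IsGGTree) {a b : Fin n} {c : Bool}
    (h : (a, b, c) ∈ G.arr) : a ≠ b := fun hab => hG.no_loop b c (by rw [hab] at h; exact h)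

lemma arr_adj {G : GCQuiver n} (hG : G.IsGGTree) {a b : Fin n} {c : Bool}
    (h : (a, b, c) ∈ G.arr) : G.adj.Adj a b := ⟨arr_ne hG h, c, Or.inl h⟩

end GCQuiver


namespace GCQuiver

open Classical SimpleGraph

variable {n : ℕ}

section Region

variable {G : GCQuiver n} {V : Fin n}

lemma re_ne_V {c : Bool} {w : Fin n} (hG : G.IsGGTree) (h : re G V c w) : w ≠ V :=
  arr_ne hG h.1

lemma re_unique (hG : G.IsGGTree) {c : Bool} {w w' : Fin n}
    (h : re G V c w) (h' : re G V c w') : w = w' :=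
  hG.in_unique V c w w' h.1 h'.1

lemma re_color_eq (hG : G.IsGGTree) {c c' : Bool} {w : Fin n}
    (h : re G V c w) (h' : re G V c' w) : c = c' :=
  color_unique hG h.1 h'.1

lemma adjAvoid_adj (hG : G.IsGGTree) {w : Fin n} {c : Bool} {a b : Fin n}
    (h : adjAvoid G V w c a b) : G.adj.Adj a b := by
  obtain ⟨⟨d, hd | hd⟩, -⟩ := h
  · exact arr_adj hG hd
  · exact (arr_adj hG hd).symm

lemma mem_region_iff {w : Fin n} {c : Bool} {u : Fin n} :
    u ∈ swapRegion G V w c ↔ Relation.ReflTransGen (adjAvoid G V w c) w u := Iff.rfl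

/-- The walk extracted from a region membership: avoids the two removed edges and
stays inside the region. -/
lemma region_walk (hG : G.IsGGTree) {w : Fin n} {c : Bool} {u : Fin n}
    (hu : u ∈ swapRegion G V w c) :
    ∃ p : G.adj.Walk w u,
      (∀ e ∈ p.edges, ∃ a b, adjAvoid G V w c a b ∧ e = s(a, b)) ∧
      (∀ x ∈ p.support, x ∈ swapRegion G V w c) := by
  exact reflTransGen_toWalk (fun a b hab => adjAvoid_adj hG hab) hu

lemma region_ne_V (hG : G.IsGGTree) {c : Bool} {w : Fin n} (hre : re G V c w) {u : Fin n}
    (hu : u ∈ swapRegion G V w c) : u ≠ V := by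
  rintro rfl
  obtain ⟨p, hpe, -⟩ := region_walk hG hu
  have hmem := tree_walk_edge_mem hG.tree (arr_adj hG hre.1) p
  obtain ⟨a, b, hab, he⟩ := hpe _ hmem
  rcases Sym2.eq_iff.mp he with ⟨h1, h2⟩ | ⟨h1, h2⟩
  · exact hab.2.1 ⟨h1.symm, h2.symm⟩
  · exact hab.2.2.1 ⟨h2.symm, h1.symm⟩

lemma region_not_adj_V (hG : G.IsGGTree) {c : Bool} {w : Fin n} (hre : re G V c w)
    {u : Fin n} (hu : u ∈ swapRegion G V w c) (huw : u ≠ w) : ¬G.adj.Adj u V := by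
  intro hadj
  obtain ⟨p, hpe, -⟩ := region_walk hG hu
  have hne : u ≠ V := region_ne_V hG hre hu
  set q := p.concat hadj with hq
  have hmem := tree_walk_edge_mem hG.tree (arr_adj hG hre.1) q
  rw [hq, SimpleGraph.Walk.edges_concat, List.concat_eq_append] at hmem
  rcases List.mem_append.mp hmem with hmem | hmem
  · obtain ⟨a, b, hab, he⟩ := hpe _ hmem
    rcases Sym2.eq_iff.mp he with ⟨h1, h2⟩ | ⟨h1, h2⟩
    · exact hab.2.1 ⟨h1.symm, h2.symm⟩
    · exact hab.2.2.1 ⟨h2.symm, h1.symm⟩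
  · simp only [List.mem_singleton] at hmem
    rcases Sym2.eq_iff.mp hmem with ⟨h1, h2⟩ | ⟨h1, h2⟩
    · exact huw h1.symm
    · exact hne h2.symm

lemma region_not_l (hG : G.IsGGTree) {c : Bool} {w : Fin n} (hre : re G V c w)
    {l : Fin n} (hl : (l, w, c) ∈ G.arr) : l ∉ swapRegion G V w c := by
  intro hmem
  obtain ⟨p, hpe, -⟩ := region_walk hG hmem
  have hadj : G.adj.Adj w l := (arr_adj hG hl).symm
  have hmem' := tree_walk_edge_mem hG.tree hadj p
  obtain ⟨a, b, hab, he⟩ := hpe _ hmem'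
  obtain ⟨⟨d, hd | hd⟩, -, -, h4, h5⟩ := hab
  · rcases Sym2.eq_iff.mp he with ⟨h1, h2⟩ | ⟨h1, h2⟩
    · -- a = w, b = l : arrow (w,l,d) and (l,w,c) : opposite
      subst h1; subst h2; exact not_opp hG hd hl
    · -- a = l, b = w : arrow (l,w,d), color d = c
      subst h1; subst h2
      exact h4 ⟨(color_unique hG hd hl) ▸ hd, rfl⟩
  · rcases Sym2.eq_iff.mp he with ⟨h1, h2⟩ | ⟨h1, h2⟩
    · -- a = w, b = l : arrow (l,w,d)
      subst h1; subst h2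
      exact h5 ⟨(color_unique hG hd hl) ▸ hd, rfl⟩
    · subst h1; subst h2; exact not_opp hG hd hl

lemma region_disjoint (hG : G.IsGGTree) {c c' : Bool} {w w' : Fin n}
    (hre : re G V c w) (hre' : re G V c' w') (hww' : w ≠ w') {u : Fin n}
    (hu : u ∈ swapRegion G V w c) (hu' : u ∈ swapRegion G V w' c') : False := by
  obtain ⟨p, -, hps⟩ := region_walk hG hu
  obtain ⟨q, -, hqs⟩ := region_walk hG hu'
  have hwalk : G.adj.Walk w w' := p.append q.reverse
  have hV := tree_walk_center hG.tree ((arr_adj hG hre.1).symm)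
    ((arr_adj hG hre'.1).symm) hww' (p.append q.reverse)
  rw [SimpleGraph.Walk.mem_support_append_iff] at hV
  rcases hV with hV | hV
  · exact region_ne_V hG hre (hps V hV) rfl
  · rw [SimpleGraph.Walk.support_reverse, List.mem_reverse] at hV
    exact region_ne_V hG hre' (hqs V hV) rfl

lemma region_pin (hG : G.IsGGTree) {c c₀ : Bool} {w w₀ : Fin n}
    (hre : re G V c w) (hre₀ : re G V c₀ w₀) {u : Fin n}
    (hu : u ∈ swapRegion G V w c) (hu₀ : u ∈ swapRegion G V w₀ c₀) :
    c₀ = c ∧ w₀ = w := by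
  by_cases hww : w₀ = w
  · subst hww; exact ⟨re_color_eq hG hre₀ hre, rfl⟩
  · exact absurd (region_disjoint hG hre hre₀ (fun h => hww h.symm) hu hu₀) not_false

lemma flips_symm {a b : Fin n} (h : flips G V a b) : flips G V b a := by
  obtain ⟨c, w, h1, h2, h3⟩ := h; exact ⟨c, w, h1, h3, h2⟩

lemma not_flips_V_right (hG : G.IsGGTree) {a : Fin n} : ¬flips G V a V := by
  rintro ⟨c, w, hre, -, hV⟩
  exact region_ne_V hG hre hV rfl

lemma not_flips_V_left (hG : G.IsGGTree) {a : Fin n} : ¬flips G V V a := by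
  intro h; exact not_flips_V_right hG (flips_symm h)

/-- Stepping out of a region along an outgoing arrow. -/
lemma region_step_out (hG : G.IsGGTree) {c : Bool} {w : Fin n} (hre : re G V c w)
    {u x : Fin n} {d : Bool} (hu : u ∈ swapRegion G V w c) (harr : (u, x, d) ∈ G.arr) :
    x ∈ swapRegion G V w c ∨ (u = w ∧ x = V ∧ d = c) := by
  by_cases h2 : u = w ∧ x = V
  · right
    refine ⟨h2.1, h2.2, ?_⟩
    rw [h2.1, h2.2] at harr
    exact color_unique hG harr hre.1
  by_cases h4 : x = w
  · left; rw [h4]; exact Relation.ReflTransGen.refl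
  · left
    refine Relation.ReflTransGen.tail hu ⟨⟨d, Or.inl harr⟩, h2, ?_, ?_, ?_⟩
    · rintro ⟨rfl, rfl⟩
      exact region_ne_V hG hre hu rfl
    · rintro ⟨hc, rfl⟩; exact h4 rfl
    · rintro ⟨hc, rfl⟩
      exact not_opp hG harr hc

/-- Stepping out of a region along an incoming arrow. -/
lemma region_step_in (hG : G.IsGGTree) {c : Bool} {w : Fin n} (hre : re G V c w)
    {u x : Fin n} {d : Bool} (hu : u ∈ swapRegion G V w c) (harr : (x, u, d) ∈ G.arr) :
    x ∈ swapRegion G V w c ∨ (u = w ∧ d = c) := by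
  by_cases h5 : u = w ∧ d = c
  · exact Or.inr h5
  · left
    refine Relation.ReflTransGen.tail hu ⟨⟨d, Or.inr harr⟩, ?_, ?_, ?_, ?_⟩
    · rintro ⟨rfl, rfl⟩
      exact not_opp hG harr hre.1
    · rintro ⟨rfl, -⟩
      exact region_ne_V hG hre hu rfl
    · rintro ⟨hc, rfl⟩
      exact not_opp hG harr hc
    · rintro ⟨hc, rfl⟩
      exact h5 ⟨rfl, color_unique hG harr hc⟩

end Region

end GCQuiver


namespace GCQuiver

open Classical SimpleGraph

variable {n : ℕ}

section Classify

variable {G : GCQuiver n} {V : Fin n}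

lemma no_triangle (hG : G.IsGGTree) {x y : Fin n} (hx : G.adj.Adj V x)
    (hy : G.adj.Adj V y) (hne : x ≠ y) : ¬G.adj.Adj x y := by
  intro hadj
  have := tree_walk_center hG.tree hx hy hne (SimpleGraph.Walk.cons hadj SimpleGraph.Walk.nil)
  simp only [SimpleGraph.Walk.support_cons, SimpleGraph.Walk.support_nil,
    List.mem_cons, List.mem_singleton] at this
  rcases this with h | h | h
  · exact hx.ne h
  · exact hy.ne h
  · exact absurd h List.not_mem_nil

lemma mem_mutate_iff {a b : Fin n} {γ : Bool} :
    (a, b, γ) ∈ (G.mutate V).arr ↔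
      (∃ d₀, (a, b, d₀) ∈ G.arr ∧ ¬(b = V ∧ re G V d₀ a) ∧
        ¬(a = V ∧ ∃ w, re G V (!d₀) w) ∧ ¬(∃ w, re G V d₀ w ∧ b = w) ∧
        γ = (if flips G V a b then !d₀ else d₀)) ∨
      (a = V ∧ re G V (!γ) b) ∨
      (re G V (!γ) a ∧ (V, b, γ) ∈ G.arr) ∨
      (b = V ∧ ∃ w, re G V γ w ∧ (a, w, γ) ∈ G.arr) := Iff.rfl

lemma mutate_deg_def (G : GCQuiver n) (V : Fin n) (a b : Fin n) (γ : Bool) :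
    (G.mutate V).deg (a, b, γ) =
      (if a = V ∧ re G V (!γ) b then 1
      else if re G V (!γ) a ∧ (V, b, γ) ∈ G.arr then G.deg (V, b, γ)
      else if h : b = V ∧ ∃ w, re G V γ w ∧ (a, w, γ) ∈ G.arr then
        G.deg (a, h.2.choose, γ)
      else if flips G V a b ∧ (a, b, !γ) ∈ G.arr then
        G.deg (a, b, !γ)
      else if b = V then G.deg (a, b, γ) - 1
      else if a = V then G.deg (a, b, γ) + 1
      else G.deg (a, b, γ)) := rfl

/-- Membership intro: reversed degree-one arrow. -/
lemma mem_mutate_K2 {b : Fin n} {γ : Bool} (h : re G V (!γ) b) :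
    (V, b, γ) ∈ (G.mutate V).arr := Or.inr (Or.inl ⟨rfl, h⟩)

/-- Membership intro: reattached outgoing arrow. -/
lemma mem_mutate_K3 {a b : Fin n} {γ : Bool} (h : re G V (!γ) a) (h' : (V, b, γ) ∈ G.arr) :
    (a, b, γ) ∈ (G.mutate V).arr := Or.inr (Or.inr (Or.inl ⟨h, h'⟩))

/-- Membership intro: reattached incoming arrow. -/
lemma mem_mutate_K4 {a w : Fin n} {γ : Bool} (h : re G V γ w) (h' : (a, w, γ) ∈ G.arr) :
    (a, V, γ) ∈ (G.mutate V).arr := Or.inr (Or.inr (Or.inr ⟨rfl, w, h, h'⟩))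

/-- Membership intro: retained arrow. -/
lemma mem_mutate_K1 {a b : Fin n} {d₀ : Bool} (h : (a, b, d₀) ∈ G.arr)
    (h2 : ¬(b = V ∧ re G V d₀ a)) (h3 : ¬(a = V ∧ ∃ w, re G V (!d₀) w))
    (h4 : ¬(∃ w, re G V d₀ w ∧ b = w)) :
    (a, b, if flips G V a b then !d₀ else d₀) ∈ (G.mutate V).arr :=
  Or.inl ⟨d₀, h, h2, h3, h4, rfl⟩

/-- Degree: reversed degree-one arrow. -/
lemma deg_mutate_K2 {b : Fin n} {γ : Bool} (h : re G V (!γ) b) :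
    (G.mutate V).deg (V, b, γ) = 1 := by
  rw [mutate_deg_def, if_pos ⟨rfl, h⟩]

/-- Degree: reattached outgoing arrow. -/
lemma deg_mutate_K3 (hG : G.IsGGTree) {a b : Fin n} {γ : Bool} (h : re G V (!γ) a)
    (h' : (V, b, γ) ∈ G.arr) : (G.mutate V).deg (a, b, γ) = G.deg (V, b, γ) := by
  rw [mutate_deg_def, if_neg, if_pos ⟨h, h'⟩]
  rintro ⟨rfl, hre⟩
  exact hG.no_loop _ _ h.1

/-- Degree: reattached incoming arrow. -/
lemma deg_mutate_K4 (hG : G.IsGGTree) {a w : Fin n} {γ : Bool} (h : re G V γ w)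
    (h' : (a, w, γ) ∈ G.arr) : (G.mutate V).deg (a, V, γ) = G.deg (a, w, γ) := by
  have hex : V = V ∧ ∃ w', re G V γ w' ∧ (a, w', γ) ∈ G.arr := ⟨rfl, w, h, h'⟩
  rw [mutate_deg_def, if_neg, if_neg, dif_pos hex]
  · have := re_unique hG hex.2.choose_spec.1 h
    rw [this]
  · rintro ⟨hre, harr⟩
    exact hG.no_loop _ _ harr
  · rintro ⟨rfl, hre⟩
    exact hG.no_loop _ _ hre.1

/-- Degree: retained arrow whose color gets flipped. -/
lemma deg_mutate_K1flip (hG : G.IsGGTree) {a b : Fin n} {γ : Bool}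
    (hfl : flips G V a b) (harr : (a, b, !γ) ∈ G.arr) :
    (G.mutate V).deg (a, b, γ) = G.deg (a, b, !γ) := by
  rw [mutate_deg_def, if_neg, if_neg, dif_neg, if_pos ⟨hfl, harr⟩]
  · rintro ⟨rfl, -⟩
    exact not_flips_V_right hG hfl
  · rintro ⟨hre, hVb⟩
    obtain ⟨c₀, w₀, hre₀, haR, hbR⟩ := hfl
    obtain ⟨hc, hw⟩ := region_pin hG hre hre₀ Relation.ReflTransGen.refl haR
    rw [hw] at hre₀ hbR
    have hbV : b = V := hG.out_unique a (!γ) b V harr hre.1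
    exact region_ne_V hG hre₀ hbR hbV
  · rintro ⟨rfl, -⟩
    exact not_flips_V_left hG hfl

/-- Degree: retained incoming arrow at `V`. -/
lemma deg_mutate_K1in (hG : G.IsGGTree) {a : Fin n} {γ : Bool}
    (harr : (a, V, γ) ∈ G.arr)
    (hnk4 : ¬∃ w, re G V γ w ∧ (a, w, γ) ∈ G.arr) :
    (G.mutate V).deg (a, V, γ) = G.deg (a, V, γ) - 1 := by
  rw [mutate_deg_def, if_neg, if_neg, dif_neg, if_neg, if_pos rfl]
  · rintro ⟨hfl, -⟩
    exact not_flips_V_right hG hfl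
  · rintro ⟨-, w, hw, haw⟩
    exact hnk4 ⟨w, hw, haw⟩
  · rintro ⟨hre, hVV⟩
    exact hG.no_loop _ _ hVV
  · rintro ⟨rfl, hre⟩
    exact hG.no_loop _ _ harr

/-- Degree: retained outgoing arrow at `V`. -/
lemma deg_mutate_K1out (hG : G.IsGGTree) {b : Fin n} {γ : Bool}
    (harr : (V, b, γ) ∈ G.arr) (hnre : ¬∃ w, re G V (!γ) w) :
    (G.mutate V).deg (V, b, γ) = G.deg (V, b, γ) + 1 := by
  have hbV : b ≠ V := fun h => hG.no_loop V γ (h ▸ harr)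
  rw [mutate_deg_def, if_neg, if_neg, dif_neg, if_neg, if_neg hbV, if_pos rfl]
  · rintro ⟨hfl, -⟩
    exact not_flips_V_left hG hfl
  · rintro ⟨hb, -⟩
    exact hbV hb
  · rintro ⟨hre, -⟩
    exact hG.no_loop _ _ hre.1
  · rintro ⟨-, hre⟩
    exact hnre ⟨b, hre⟩

/-- Degree: retained generic arrow. -/
lemma deg_mutate_K1gen (hG : G.IsGGTree) {a b : Fin n} {γ : Bool}
    (ha : a ≠ V) (hb : b ≠ V) (hnf : ¬flips G V a b) (harr : (a, b, γ) ∈ G.arr) :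
    (G.mutate V).deg (a, b, γ) = G.deg (a, b, γ) := by
  rw [mutate_deg_def, if_neg, if_neg, dif_neg, if_neg, if_neg hb, if_neg ha]
  · rintro ⟨hfl, -⟩
    exact hnf hfl
  · rintro ⟨hbV, -⟩
    exact hb hbV
  · rintro ⟨hre, hVb⟩
    rcases region_step_out hG hre Relation.ReflTransGen.refl harr with hbR | ⟨-, hbV, hγ⟩
    · exact hnf ⟨!γ, a, hre, Relation.ReflTransGen.refl, hbR⟩
    · exact hb hbV
  · rintro ⟨haV, -⟩
    exact ha haV

end Classify

end GCQuiver


namespace GCQuiver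

open Classical SimpleGraph

variable {n : ℕ}

section Gentle

variable {G : GCQuiver n} {V : Fin n}

lemma bool_ne_not (γ : Bool) : ¬γ = !γ := by cases γ <;> simp

lemma bool_swap {x y : Bool} (h : x = !y) : y = !x := by
  cases x <;> cases y <;> simp_all

lemma bool_not_inj {x y : Bool} (h : (!x) = (!y)) : x = y := by
  cases x <;> cases y <;> simp_all

lemma mutate_no_loop (hG : G.IsGGTree) : ∀ i c, (i, i, c) ∉ (G.mutate V).arr := by
  intro i γ h
  rcases mem_mutate_iff.mp h with ⟨d, hd, -, -, -, -⟩ | ⟨hiV, hre⟩ | ⟨hre, hV⟩ |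
    ⟨hiV, w, hw, hiw⟩
  · exact hG.no_loop _ _ hd
  · rw [hiV] at hre
    exact hG.no_loop _ _ hre.1
  · exact not_opp hG hre.1 hV
  · rw [hiV] at hiw
    exact not_opp hG hw.1 hiw

lemma mutate_deg_pos (hG : G.IsGGTree) :
    ∀ e ∈ (G.mutate V).arr, 1 ≤ (G.mutate V).deg e := by
  rintro ⟨a, b, γ⟩ h
  rcases mem_mutate_iff.mp h with ⟨d, hd, c2, c3, c4, hγ⟩ | ⟨haV, hr2⟩ | ⟨hr3, hb3⟩ |
    ⟨hbV, w, hw, ha⟩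
  · by_cases hf : flips G V a b
    · rw [if_pos hf] at hγ
      have hd' : (a, b, !γ) ∈ G.arr := by
        rw [← bool_swap hγ]; exact hd
      rw [deg_mutate_K1flip hG hf hd']
      exact hG.deg_pos _ hd'
    · rw [if_neg hf] at hγ
      rw [← hγ] at hd
      by_cases hb : b = V
      · rw [hb] at hd c2
        rw [← hγ] at c2
        have hnk4 : ¬∃ w, re G V γ w ∧ (a, w, γ) ∈ G.arr := by
          rintro ⟨w, hw, haw⟩
          have hVw : V = w := hG.out_unique a γ V w hd haw
          exact hG.no_loop _ _ (hVw ▸ hw.1)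
        rw [hb, deg_mutate_K1in hG hd hnk4]
        have hne1 : G.deg (a, V, γ) ≠ 1 := fun h1 => c2 ⟨rfl, hd, h1⟩
        have := hG.deg_pos _ hd
        omega
      · by_cases ha : a = V
        · rw [ha] at hd c3
          rw [← hγ] at c3
          rw [ha, deg_mutate_K1out hG hd (fun ⟨w, hw⟩ => c3 ⟨rfl, w, hw⟩)]
          omega
        · rw [deg_mutate_K1gen hG ha hb hf hd]
          exact hG.deg_pos _ hd
  · rw [haV, deg_mutate_K2 hr2]
  · rw [deg_mutate_K3 hG hr3 hb3]
    exact hG.deg_pos _ hb3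
  · rw [hbV, deg_mutate_K4 hG hw ha]
    exact hG.deg_pos _ ha

lemma mutate_out_unique (hG : G.IsGGTree) : ∀ u γ b b',
    (u, b, γ) ∈ (G.mutate V).arr → (u, b', γ) ∈ (G.mutate V).arr → b = b' := by
  intro u γ b b' h1 h2
  rcases mem_mutate_iff.mp h1 with ⟨d, hd, c2, c3, c4, hγ⟩ | ⟨huV, hr2⟩ | ⟨hr3, hb3⟩ |
    ⟨hbV, w1, hw1, ha1⟩
  · rcases mem_mutate_iff.mp h2 with ⟨d', hd', c2', c3', c4', hγ'⟩ | ⟨huV', hr2'⟩ |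
      ⟨hr3', hb3'⟩ | ⟨hbV', w2, hw2, ha2⟩
    · -- K1 K1
      by_cases hf : flips G V u b <;> by_cases hf' : flips G V u b'
      · rw [if_pos hf] at hγ
        rw [if_pos hf'] at hγ'
        have hdd' : d = d' := bool_not_inj (hγ.symm.trans hγ')
        rw [hdd'] at hd
        exact hG.out_unique u d' b b' hd hd'
      · rw [if_pos hf] at hγ
        rw [if_neg hf'] at hγ'
        rw [← hγ'] at hd'
        obtain ⟨c₀, w₀, hre₀, huR, hbR⟩ := hf
        rcases region_step_out hG hre₀ huR hd' with hbR' | ⟨huw, hbV, hγc⟩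
        · exact absurd ⟨c₀, w₀, hre₀, huR, hbR'⟩ hf'
        · refine absurd ⟨hbV, ?_⟩ c2'
          rw [← hγ', hγc, huw]
          exact hre₀
      · rw [if_neg hf] at hγ
        rw [if_pos hf'] at hγ'
        rw [← hγ] at hd
        obtain ⟨c₀, w₀, hre₀, huR, hbR⟩ := hf'
        rcases region_step_out hG hre₀ huR hd with hbR' | ⟨huw, hbV, hγc⟩
        · exact absurd ⟨c₀, w₀, hre₀, huR, hbR'⟩ hf
        · refine absurd ⟨hbV, ?_⟩ c2
          rw [← hγ, hγc, huw]
          exact hre₀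
      · rw [if_neg hf] at hγ
        rw [if_neg hf'] at hγ'
        rw [← hγ] at hd
        rw [← hγ'] at hd'
        exact hG.out_unique u γ b b' hd hd'
    · -- K1 K2
      exfalso
      rw [huV'] at hγ
      rw [if_neg (not_flips_V_left hG)] at hγ
      exact c3 ⟨huV', b', by rw [← hγ]; exact hr2'⟩
    · -- K1 K3
      exfalso
      by_cases hf : flips G V u b
      · rw [if_pos hf] at hγ
        obtain ⟨c₀, w₀, hre₀, huR, hbR⟩ := hf
        obtain ⟨hc, hw⟩ := region_pin hG hr3' hre₀ Relation.ReflTransGen.refl huR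
        rw [hc, hw] at hbR
        have hd'' : (u, b, !γ) ∈ G.arr := by
          rw [← bool_swap hγ]; exact hd
        have hbV : b = V := hG.out_unique u (!γ) b V hd'' hr3'.1
        exact region_ne_V hG hr3' hbR hbV
      · rw [if_neg hf] at hγ
        rw [← hγ] at hd
        rcases region_step_out hG hr3' Relation.ReflTransGen.refl hd with hbR |
          ⟨-, hbV, hγc⟩
        · exact hf ⟨!γ, u, hr3', Relation.ReflTransGen.refl, hbR⟩
        · exact bool_ne_not γ hγc
    · -- K1 K4
      exfalso
      by_cases hf : flips G V u b
      · obtain ⟨c₀, w₀, hre₀, huR, hbR⟩ := hf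
        rcases region_step_out hG hre₀ huR ha2 with hwR | ⟨-, hwV, -⟩
        · obtain ⟨hc, hw⟩ := region_pin hG hre₀ hw2 hwR Relation.ReflTransGen.refl
          rw [← hc, ← hw] at huR
          exact region_not_l hG hw2 ha2 huR
        · exact re_ne_V hG hw2 hwV
      · rw [if_neg hf] at hγ
        rw [← hγ] at hd c4
        exact c4 ⟨w2, hw2, hG.out_unique u γ b w2 hd ha2⟩
  · rcases mem_mutate_iff.mp h2 with ⟨d', hd', c2', c3', c4', hγ'⟩ | ⟨huV', hr2'⟩ |
      ⟨hr3', hb3'⟩ | ⟨hbV', w2, hw2, ha2⟩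
    · -- K2 K1
      exfalso
      rw [huV] at hγ'
      rw [if_neg (not_flips_V_left hG)] at hγ'
      exact c3' ⟨huV, b, by rw [← hγ']; exact hr2⟩
    · -- K2 K2
      exact re_unique hG hr2 hr2'
    · -- K2 K3
      rw [huV] at hr3'
      exact absurd hr3'.1 (hG.no_loop _ _)
    · -- K2 K4
      rw [huV] at ha2
      exact (not_opp hG hw2.1 ha2).elim
  · rcases mem_mutate_iff.mp h2 with ⟨d', hd', c2', c3', c4', hγ'⟩ | ⟨huV', hr2'⟩ |
      ⟨hr3', hb3'⟩ | ⟨hbV', w2, hw2, ha2⟩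
    · -- K3 K1
      exfalso
      by_cases hf : flips G V u b'
      · rw [if_pos hf] at hγ'
        obtain ⟨c₀, w₀, hre₀, huR, hbR⟩ := hf
        obtain ⟨hc, hw⟩ := region_pin hG hr3 hre₀ Relation.ReflTransGen.refl huR
        rw [hc, hw] at hbR
        have hd'' : (u, b', !γ) ∈ G.arr := by
          rw [← bool_swap hγ']; exact hd'
        have hbV : b' = V := hG.out_unique u (!γ) b' V hd'' hr3.1
        exact region_ne_V hG hr3 hbR hbV
      · rw [if_neg hf] at hγ'
        rw [← hγ'] at hd'
        rcases region_step_out hG hr3 Relation.ReflTransGen.refl hd' with hbR |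
          ⟨-, hbV, hγc⟩
        · exact hf ⟨!γ, u, hr3, Relation.ReflTransGen.refl, hbR⟩
        · exact bool_ne_not γ hγc
    · -- K3 K2
      rw [huV'] at hr3
      exact absurd hr3.1 (hG.no_loop _ _)
    · -- K3 K3
      exact hG.out_unique V γ b b' hb3 hb3'
    · -- K3 K4
      exfalso
      have h1a : G.adj.Adj V u := (arr_adj hG hr3.1).symm
      have h2a : G.adj.Adj V w2 := (arr_adj hG hw2.1).symm
      have hne : u ≠ w2 := by
        rintro rfl
        exact bool_ne_not γ (color_unique hG hw2.1 hr3.1)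
      exact no_triangle hG h1a h2a hne (arr_adj hG ha2)
  · rcases mem_mutate_iff.mp h2 with ⟨d', hd', c2', c3', c4', hγ'⟩ | ⟨huV', hr2'⟩ |
      ⟨hr3', hb3'⟩ | ⟨hbV', w2, hw2, ha2⟩
    · -- K4 K1
      exfalso
      by_cases hf : flips G V u b'
      · obtain ⟨c₀, w₀, hre₀, huR, hbR⟩ := hf
        rcases region_step_out hG hre₀ huR ha1 with hwR | ⟨-, hwV, -⟩
        · obtain ⟨hc, hw⟩ := region_pin hG hre₀ hw1 hwR Relation.ReflTransGen.refl
          rw [← hc, ← hw] at huR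
          exact region_not_l hG hw1 ha1 huR
        · exact re_ne_V hG hw1 hwV
      · rw [if_neg hf] at hγ'
        rw [← hγ'] at hd' c4'
        exact c4' ⟨w1, hw1, hG.out_unique u γ b' w1 hd' ha1⟩
    · -- K4 K2
      rw [huV'] at ha1
      exact (not_opp hG hw1.1 ha1).elim
    · -- K4 K3
      exfalso
      have h1a : G.adj.Adj V u := (arr_adj hG hr3'.1).symm
      have h2a : G.adj.Adj V w1 := (arr_adj hG hw1.1).symm
      have hne : u ≠ w1 := by
        rintro rfl
        exact bool_ne_not γ (color_unique hG hw1.1 hr3'.1)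
      exact no_triangle hG h1a h2a hne (arr_adj hG ha1)
    · -- K4 K4
      exact hbV.trans hbV'.symm

lemma mutate_in_unique (hG : G.IsGGTree) : ∀ v γ a a',
    (a, v, γ) ∈ (G.mutate V).arr → (a', v, γ) ∈ (G.mutate V).arr → a = a' := by
  intro v γ a a' h1 h2
  rcases mem_mutate_iff.mp h1 with ⟨d, hd, c2, c3, c4, hγ⟩ | ⟨haV, hr2⟩ | ⟨hr3, hb3⟩ |
    ⟨hvV, w1, hw1, ha1⟩
  · rcases mem_mutate_iff.mp h2 with ⟨d', hd', c2', c3', c4', hγ'⟩ | ⟨haV', hr2'⟩ |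
      ⟨hr3', hb3'⟩ | ⟨hvV', w2, hw2, ha2⟩
    · -- K1 K1
      by_cases hf : flips G V a v <;> by_cases hf' : flips G V a' v
      · rw [if_pos hf] at hγ
        rw [if_pos hf'] at hγ'
        have hdd' : d = d' := bool_not_inj (hγ.symm.trans hγ')
        rw [hdd'] at hd
        exact hG.in_unique v d' a a' hd hd'
      · rw [if_pos hf] at hγ
        rw [if_neg hf'] at hγ'
        rw [← hγ'] at hd'
        obtain ⟨c₀, w₀, hre₀, haR, hvR⟩ := hf
        rcases region_step_in hG hre₀ hvR hd' with haR' | ⟨hvw, hγc⟩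
        · exact absurd ⟨c₀, w₀, hre₀, haR', hvR⟩ hf'
        · exfalso
          apply c4'
          refine ⟨w₀, ?_, hvw⟩
          rw [← hγ', hγc]
          exact hre₀
      · rw [if_neg hf] at hγ
        rw [if_pos hf'] at hγ'
        rw [← hγ] at hd
        obtain ⟨c₀, w₀, hre₀, haR, hvR⟩ := hf'
        rcases region_step_in hG hre₀ hvR hd with haR' | ⟨hvw, hγc⟩
        · exact absurd ⟨c₀, w₀, hre₀, haR', hvR⟩ hf
        · exfalso
          apply c4
          refine ⟨w₀, ?_, hvw⟩
          rw [← hγ, hγc]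
          exact hre₀
      · rw [if_neg hf] at hγ
        rw [if_neg hf'] at hγ'
        rw [← hγ] at hd
        rw [← hγ'] at hd'
        exact hG.in_unique v γ a a' hd hd'
    · -- K1 K2
      exfalso
      by_cases hf : flips G V a v
      · rw [if_pos hf] at hγ
        apply c4
        refine ⟨v, ?_, rfl⟩
        rw [bool_swap hγ]
        exact hr2'
      · rw [if_neg hf] at hγ
        rw [← hγ] at hd
        rcases region_step_in hG hr2' Relation.ReflTransGen.refl hd with haR | ⟨-, hγc⟩
        · exact hf ⟨!γ, v, hr2', haR, Relation.ReflTransGen.refl⟩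
        · exact bool_ne_not γ hγc
    · -- K1 K3
      exfalso
      by_cases hf : flips G V a v
      · obtain ⟨c₀, w₀, hre₀, haR, hvR⟩ := hf
        by_cases hvw : v = w₀
        · rw [hvw] at hb3'
          exact not_opp hG hre₀.1 hb3'
        · exact region_not_adj_V hG hre₀ hvR hvw ((arr_adj hG hb3').symm)
      · rw [if_neg hf] at hγ
        rw [← hγ] at hd c3
        have haV : a = V := hG.in_unique v γ a V hd hb3'
        exact c3 ⟨haV, a', hr3'⟩
    · -- K1 K4
      exfalso
      rw [hvV'] at hγ hd
      rw [if_neg (not_flips_V_right hG)] at hγ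
      rw [← hγ] at hd
      have haw : a = w2 := hG.in_unique V γ a w2 hd hw2.1
      refine c2 ⟨hvV', ?_⟩
      rw [← hγ, haw]
      exact hw2
  · rcases mem_mutate_iff.mp h2 with ⟨d', hd', c2', c3', c4', hγ'⟩ | ⟨haV', hr2'⟩ |
      ⟨hr3', hb3'⟩ | ⟨hvV', w2, hw2, ha2⟩
    · -- K2 K1
      exfalso
      by_cases hf : flips G V a' v
      · rw [if_pos hf] at hγ'
        apply c4'
        refine ⟨v, ?_, rfl⟩
        rw [bool_swap hγ']
        exact hr2
      · rw [if_neg hf] at hγ'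
        rw [← hγ'] at hd'
        rcases region_step_in hG hr2 Relation.ReflTransGen.refl hd' with haR | ⟨-, hγc⟩
        · exact hf ⟨!γ, v, hr2, haR, Relation.ReflTransGen.refl⟩
        · exact bool_ne_not γ hγc
    · -- K2 K2
      exact haV.trans haV'.symm
    · -- K2 K3
      exact (not_opp hG hr2.1 hb3').elim
    · -- K2 K4
      rw [hvV'] at hr2
      exact absurd hr2.1 (hG.no_loop _ _)
  · rcases mem_mutate_iff.mp h2 with ⟨d', hd', c2', c3', c4', hγ'⟩ | ⟨haV', hr2'⟩ |
      ⟨hr3', hb3'⟩ | ⟨hvV', w2, hw2, ha2⟩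
    · -- K3 K1
      exfalso
      by_cases hf : flips G V a' v
      · obtain ⟨c₀, w₀, hre₀, haR, hvR⟩ := hf
        by_cases hvw : v = w₀
        · rw [hvw] at hb3
          exact not_opp hG hre₀.1 hb3
        · exact region_not_adj_V hG hre₀ hvR hvw ((arr_adj hG hb3).symm)
      · rw [if_neg hf] at hγ'
        rw [← hγ'] at hd' c3'
        have haV : a' = V := hG.in_unique v γ a' V hd' hb3
        exact c3' ⟨haV, a, hr3⟩
    · -- K3 K2
      exact (not_opp hG hr2'.1 hb3).elim
    · -- K3 K3
      exact re_unique hG hr3 hr3'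
    · -- K3 K4
      rw [hvV'] at hb3
      exact absurd hb3 (hG.no_loop _ _)
  · rcases mem_mutate_iff.mp h2 with ⟨d', hd', c2', c3', c4', hγ'⟩ | ⟨haV', hr2'⟩ |
      ⟨hr3', hb3'⟩ | ⟨hvV', w2, hw2, ha2⟩
    · -- K4 K1
      exfalso
      rw [hvV] at hγ' hd'
      rw [if_neg (not_flips_V_right hG)] at hγ'
      rw [← hγ'] at hd'
      have haw : a' = w1 := hG.in_unique V γ a' w1 hd' hw1.1
      refine c2' ⟨hvV, ?_⟩
      rw [← hγ', haw]
      exact hw1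
    · -- K4 K2
      rw [hvV] at hr2'
      exact absurd hr2'.1 (hG.no_loop _ _)
    · -- K4 K3
      rw [hvV] at hb3'
      exact absurd hb3' (hG.no_loop _ _)
    · -- K4 K4
      have hww : w1 = w2 := re_unique hG hw1 hw2
      rw [hww] at ha1
      exact hG.in_unique w2 γ a a' ha1 ha2

end Gentle

end GCQuiver


namespace GCQuiver

open Classical SimpleGraph

variable {n : ℕ}

section Tree

variable {G : GCQuiver n} {V : Fin n}

open Classical in
/-- The inverse classification map sending an arrow of `G` to the corresponding
arrow of `mutate G V`. -/
noncomputable def phi (G : GCQuiver n) (V : Fin n) (α : Fin n × Fin n × Bool) :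
    Fin n × Fin n × Bool :=
  if α.2.1 = V ∧ re G V α.2.2 α.1 then (V, α.1, !α.2.2)
  else if h : α.1 = V ∧ ∃ w, re G V (!α.2.2) w then (h.2.choose, α.2.1, α.2.2)
  else if ∃ w, re G V α.2.2 w ∧ α.2.1 = w then (α.1, V, α.2.2)
  else (α.1, α.2.1, if flips G V α.1 α.2.1 then !α.2.2 else α.2.2)

lemma phi_def (G : GCQuiver n) (V : Fin n) (a b : Fin n) (c : Bool) :
    phi G V (a, b, c) =
      (if b = V ∧ re G V c a then (V, a, !c)
      else if h : a = V ∧ ∃ w, re G V (!c) w then (h.2.choose, b, c)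
      else if ∃ w, re G V c w ∧ b = w then (a, V, c)
      else (a, b, if flips G V a b then !c else c)) := rfl

lemma mutate_subset_image (hG : G.IsGGTree) :
    (G.mutate V).arr ⊆ phi G V '' G.arr := by
  rintro ⟨a, b, γ⟩ h
  rcases mem_mutate_iff.mp h with ⟨d, hd, c2, c3, c4, hγ⟩ | ⟨haV, hr2⟩ | ⟨hr3, hb3⟩ |
    ⟨hbV, w, hw, ha⟩
  · refine ⟨(a, b, d), hd, ?_⟩
    rw [phi_def, if_neg c2, dif_neg c3, if_neg c4, ← hγ]
  · refine ⟨(b, V, !γ), hr2.1, ?_⟩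
    rw [phi_def, if_pos ⟨rfl, hr2⟩, haV, Bool.not_not]
  · refine ⟨(V, b, γ), hb3, ?_⟩
    have hc1 : ¬(b = V ∧ re G V γ V) := by
      rintro ⟨-, h2⟩
      exact hG.no_loop _ _ h2.1
    have hc2 : V = V ∧ ∃ w, re G V (!γ) w := ⟨rfl, a, hr3⟩
    rw [phi_def, if_neg hc1, dif_pos hc2]
    have : hc2.2.choose = a := re_unique hG hc2.2.choose_spec hr3
    rw [this]
  · refine ⟨(a, w, γ), ha, ?_⟩
    have hc1 : ¬(w = V ∧ re G V γ a) := fun hh => re_ne_V hG hw hh.1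
    have hc2 : ¬(a = V ∧ ∃ w', re G V (!γ) w') := by
      rintro ⟨haV', -⟩
      rw [haV'] at ha
      exact not_opp hG ha hw.1
    rw [phi_def, if_neg hc1, dif_neg hc2, if_pos ⟨w, hw, rfl⟩, hbV]

lemma arrow_reach (hG : G.IsGGTree) {x y : Fin n} {c : Bool} (h : (x, y, c) ∈ G.arr) :
    (G.mutate V).adj.Reachable x y := by
  by_cases h1 : y = V ∧ re G V c x
  · have hm : (V, x, !c) ∈ (G.mutate V).arr :=
      mem_mutate_K2 (by rw [Bool.not_not]; exact h1.2)
    have hadj : (G.mutate V).adj.Adj V x := ⟨(re_ne_V hG h1.2).symm, !c, Or.inl hm⟩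
    rw [h1.1]
    exact hadj.symm.reachable
  by_cases h2 : x = V ∧ ∃ w, re G V (!c) w
  · obtain ⟨hxV, w, hw⟩ := h2
    rw [hxV] at h
    have hm1 : (V, w, c) ∈ (G.mutate V).arr := mem_mutate_K2 hw
    have hm2 : (w, y, c) ∈ (G.mutate V).arr := mem_mutate_K3 hw h
    have hadj1 : (G.mutate V).adj.Adj V w := ⟨(re_ne_V hG hw).symm, c, Or.inl hm1⟩
    have hwy : w ≠ y := by intro heq; rw [heq] at hm2; exact mutate_no_loop hG y c hm2
    have hadj2 : (G.mutate V).adj.Adj w y := ⟨hwy, c, Or.inl hm2⟩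
    rw [hxV]
    exact hadj1.reachable.trans hadj2.reachable
  by_cases h3 : ∃ w, re G V c w ∧ y = w
  · obtain ⟨w, hw, hyw⟩ := h3
    rw [hyw] at h
    have hm1 : (x, V, c) ∈ (G.mutate V).arr := mem_mutate_K4 hw h
    have hm2 : (V, w, !c) ∈ (G.mutate V).arr :=
      mem_mutate_K2 (by rw [Bool.not_not]; exact hw)
    have hxV : x ≠ V := by
      rintro rfl
      exact not_opp hG h hw.1
    have hadj1 : (G.mutate V).adj.Adj x V := ⟨hxV, c, Or.inl hm1⟩
    have hadj2 : (G.mutate V).adj.Adj V w := ⟨(re_ne_V hG hw).symm, !c, Or.inl hm2⟩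
    rw [hyw]
    exact hadj1.reachable.trans hadj2.reachable
  · have hm := mem_mutate_K1 h h1 h2 h3
    exact SimpleGraph.Adj.reachable ⟨arr_ne hG h, _, Or.inl hm⟩

lemma mutate_connected (hG : G.IsGGTree) : (G.mutate V).adj.Connected := by
  rw [SimpleGraph.connected_iff]
  refine ⟨?_, hG.tree.isConnected.nonempty⟩
  intro a b
  have hr := hG.tree.isConnected.preconnected a b
  rw [SimpleGraph.reachable_iff_reflTransGen] at hr
  induction hr with
  | refl => exact SimpleGraph.Reachable.refl _
  | tail h1 h2 ih =>
    refine ih.trans ?_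
    obtain ⟨hne, c, hc | hc⟩ := h2
    · exact arrow_reach hG hc
    · exact (arrow_reach hG hc).symm

lemma mutate_tree_card (hG : G.IsGGTree) :
    (G.mutate V).adj.IsTree ∧ (G.mutate V).arr.ncard = n - 1 := by
  have hle : (G.mutate V).arr.ncard ≤ n - 1 := by
    calc (G.mutate V).arr.ncard ≤ (phi G V '' G.arr).ncard :=
          Set.ncard_le_ncard (mutate_subset_image hG) (G.arr.toFinite.image _)
      _ ≤ G.arr.ncard := Set.ncard_image_le G.arr.toFinite
      _ = n - 1 := hG.card_arr
  have hedge : (G.mutate V).adj.edgeSet.ncard ≤ n - 1 := by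
    rw [edgeSet_eq_image (mutate_no_loop hG)]
    exact le_trans (Set.ncard_image_le (G.mutate V).arr.toFinite) hle
  obtain ⟨htree, hcard⟩ := isTree_of_connected_card_le (mutate_connected hG) hedge
  refine ⟨htree, le_antisymm hle ?_⟩
  calc n - 1 = (G.mutate V).adj.edgeSet.ncard := hcard.symm
    _ ≤ (G.mutate V).arr.ncard := by
        rw [edgeSet_eq_image (mutate_no_loop hG)]
        exact Set.ncard_image_le (G.mutate V).arr.toFinite

/-- Forward mutation preserves graded gentle trees. -/
lemma mutate_isGGTree (hG : G.IsGGTree) : (G.mutate V).IsGGTree :=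
  ⟨mutate_no_loop hG, (mutate_tree_card hG).1, (mutate_tree_card hG).2,
    mutate_out_unique hG, mutate_in_unique hG, mutate_deg_pos hG⟩

end Tree

end GCQuiver


namespace GCQuiver

open Classical SimpleGraph

variable {n : ℕ}

section SameTransport

variable {H K : GCQuiver n} {V : Fin n}

lemma adj_same (hs : H.Same K) : H.adj = K.adj := by
  ext i j
  constructor <;> rintro ⟨hne, c, hc⟩
  · exact ⟨hne, c, by rw [← hs.1]; exact hc⟩
  · exact ⟨hne, c, by rw [hs.1]; exact hc⟩

lemma same_isGGTree (hs : H.Same K) (hH : H.IsGGTree) : K.IsGGTree := by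
  obtain ⟨h1, h2⟩ := hs
  constructor
  · intro i c hc; exact hH.no_loop i c (h1 ▸ hc)
  · rw [← adj_same ⟨h1, h2⟩]; exact hH.tree
  · rw [← h1]; exact hH.card_arr
  · intro i c j j' hj hj'
    exact hH.out_unique i c j j' (h1 ▸ hj) (h1 ▸ hj')
  · intro j c i i' hi hi'
    exact hH.in_unique j c i i' (h1 ▸ hi) (h1 ▸ hi')
  · intro a ha
    have ha' : a ∈ H.arr := h1 ▸ ha
    rw [← h2 a ha']
    exact hH.deg_pos a ha'

lemma re_same (hs : H.Same K) (c : Bool) (w : Fin n) : re H V c w ↔ re K V c w := by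
  constructor <;> rintro ⟨h1, h2⟩
  · exact ⟨hs.1 ▸ h1, by rw [← hs.2 _ h1]; exact h2⟩
  · have h1' : (w, V, c) ∈ H.arr := hs.1 ▸ h1
    exact ⟨h1', by rw [hs.2 _ h1']; exact h2⟩

lemma region_same (hs : H.Same K) (w : Fin n) (c : Bool) :
    swapRegion H V w c = swapRegion K V w c := by
  have : adjAvoid H V w c = adjAvoid K V w c := by
    funext a b
    apply propext
    unfold adjAvoid
    rw [hs.1]
  unfold swapRegion
  rw [this]

lemma flips_same (hs : H.Same K) (a b : Fin n) : flips H V a b ↔ flips K V a b := by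
  unfold flips
  constructor <;> rintro ⟨c, w, h1, h2, h3⟩
  · refine ⟨c, w, (re_same hs c w).mp h1, ?_, ?_⟩
    · rw [← region_same hs w c]; exact h2
    · rw [← region_same hs w c]; exact h3
  · refine ⟨c, w, (re_same hs c w).mpr h1, ?_, ?_⟩
    · rw [region_same hs w c]; exact h2
    · rw [region_same hs w c]; exact h3

lemma mutate_same (hH : H.IsGGTree) (hs : H.Same K) :
    (H.mutate V).Same (K.mutate V) := by
  have hK : K.IsGGTree := same_isGGTree hs hH
  have hre' : re H V = re K V := funext fun c => funext fun w => propext (re_same hs c w)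
  have hfl' : flips H V = flips K V :=
    funext fun a => funext fun b => propext (flips_same hs a b)
  have harr := hs.1
  constructor
  · ext ⟨a, b, γ⟩
    rw [show ((a, b, γ) ∈ (H.mutate V).arr) = _ from propext mem_mutate_iff,
      show ((a, b, γ) ∈ (K.mutate V).arr) = _ from propext mem_mutate_iff,
      hre', hfl', harr]
  · rintro ⟨a, b, γ⟩ hmem
    rcases mem_mutate_iff.mp hmem with ⟨d, hd, c2, c3, c4, hγ⟩ | ⟨haV, hr2⟩ |
      ⟨hr3, hb3⟩ | ⟨hbV, w, hw, ha⟩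
    · have hdK : (a, b, d) ∈ K.arr := harr ▸ hd
      by_cases hf : flips H V a b
      · rw [if_pos hf] at hγ
        have hd' : (a, b, !γ) ∈ H.arr := by rw [← bool_swap hγ]; exact hd
        have hd'K : (a, b, !γ) ∈ K.arr := harr ▸ hd'
        rw [deg_mutate_K1flip hH hf hd', deg_mutate_K1flip hK ((flips_same hs a b).mp hf) hd'K]
        exact hs.2 _ hd'
      · rw [if_neg hf] at hγ
        rw [← hγ] at hd hdK
        by_cases hb : b = V
        · rw [hb] at hd hdK c2 ⊢
          rw [← hγ] at c2
          have hnk4 : ¬∃ w, re H V γ w ∧ (a, w, γ) ∈ H.arr := by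
            rintro ⟨w, hw, haw⟩
            have hVw : V = w := hH.out_unique a γ V w hd haw
            exact hH.no_loop _ _ (hVw ▸ hw.1)
          have hnk4K : ¬∃ w, re K V γ w ∧ (a, w, γ) ∈ K.arr := by
            rintro ⟨w, hw, haw⟩
            exact hnk4 ⟨w, (re_same hs γ w).mpr hw, harr ▸ haw⟩
          rw [deg_mutate_K1in hH hd hnk4, deg_mutate_K1in hK hdK hnk4K, hs.2 _ hd]
        · by_cases ha : a = V
          · rw [ha] at hd hdK c3 ⊢
            rw [← hγ] at c3
            have hnre : ¬∃ w, re H V (!γ) w := fun ⟨w, hw⟩ => c3 ⟨rfl, w, hw⟩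
            have hnreK : ¬∃ w, re K V (!γ) w :=
              fun ⟨w, hw⟩ => hnre ⟨w, (re_same hs _ w).mpr hw⟩
            rw [deg_mutate_K1out hH hd hnre, deg_mutate_K1out hK hdK hnreK, hs.2 _ hd]
          · rw [deg_mutate_K1gen hH ha hb hf hd,
              deg_mutate_K1gen hK ha hb (fun h => hf ((flips_same hs a b).mpr h)) hdK,
              hs.2 _ hd]
    · rw [haV, deg_mutate_K2 hr2, deg_mutate_K2 ((re_same hs _ b).mp hr2)]
    · have hb3K : (V, b, γ) ∈ K.arr := harr ▸ hb3
      rw [deg_mutate_K3 hH hr3 hb3, deg_mutate_K3 hK ((re_same hs _ a).mp hr3) hb3K,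
        hs.2 _ hb3]
    · have haK : (a, w, γ) ∈ K.arr := harr ▸ ha
      rw [hbV, deg_mutate_K4 hH hw ha, deg_mutate_K4 hK ((re_same hs _ w).mp hw) haK,
        hs.2 _ ha]

end SameTransport

end GCQuiver


namespace GCQuiver

open Classical SimpleGraph

variable {n : ℕ}

section RevMutate

variable {G : GCQuiver n} {V : Fin n}

lemma re_rev_mutate (hG : G.IsGGTree) (γ : Bool) (u : Fin n) :
    re (rev (G.mutate V)) V γ u ↔ re G V (!γ) u := by
  constructor
  · rintro ⟨h1, h2⟩
    have h1' : (V, u, γ) ∈ (G.mutate V).arr := h1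
    have h2' : (G.mutate V).deg (V, u, γ) = 1 := h2
    rcases mem_mutate_iff.mp h1' with ⟨d, hd, c2, c3, c4, hγ⟩ | ⟨-, hr2⟩ | ⟨hr3, hb3⟩ |
      ⟨huV, w, hw, ha⟩
    · exfalso
      rw [if_neg (not_flips_V_left hG)] at hγ
      rw [← hγ] at hd c3
      have hnre : ¬∃ w, re G V (!γ) w := fun ⟨w, hw⟩ => c3 ⟨rfl, w, hw⟩
      rw [deg_mutate_K1out hG hd hnre] at h2'
      have := hG.deg_pos _ hd
      omega
    · exact hr2
    · exact absurd hr3.1 (hG.no_loop _ _)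
    · exact (not_opp hG ha hw.1).elim
  · intro h
    refine ⟨?_, ?_⟩
    · show (V, u, γ) ∈ (G.mutate V).arr
      exact mem_mutate_K2 h
    · show (G.mutate V).deg (V, u, γ) = 1
      exact deg_mutate_K2 h

lemma mutate_no_out_w (hG : G.IsGGTree) {c : Bool} {w : Fin n} (hre : re G V c w)
    {z : Fin n} (hz : z ∈ swapRegion G V w c) : (w, z, !c) ∉ (G.mutate V).arr := by
  intro hmem
  rcases mem_mutate_iff.mp hmem with ⟨d, hd, c2, c3, c4, hγ⟩ | ⟨hwV, hr2⟩ |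
    ⟨hr3, hb3⟩ | ⟨hzV, w', hw', ha'⟩
  · by_cases hf : flips G V w z
    · rw [if_pos hf] at hγ
      rw [← bool_not_inj hγ] at hd
      have hzV : z = V := hG.out_unique w c z V hd hre.1
      exact region_ne_V hG hre hz hzV
    · rw [if_neg hf] at hγ
      rw [← hγ] at hd
      rcases region_step_out hG hre Relation.ReflTransGen.refl hd with hzR | ⟨-, hzV, hcc⟩
      · exact hf ⟨c, w, hre, Relation.ReflTransGen.refl, hzR⟩
      · exact bool_ne_not c hcc.symm
  · exact re_ne_V hG hre hwV
  · by_cases hzw : z = w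
    · rw [hzw] at hb3
      exact not_opp hG hb3 hre.1
    · exact region_not_adj_V hG hre hz hzw ((arr_adj hG hb3).symm)
  · exact region_ne_V hG hre hz hzV

lemma region_rev_mutate (hG : G.IsGGTree) {c : Bool} {w : Fin n} (hre : re G V c w) :
    swapRegion (rev (G.mutate V)) V w (!c) = swapRegion G V w c := by
  apply Set.Subset.antisymm
  · intro u hu
    have hu' : Relation.ReflTransGen (adjAvoid (rev (G.mutate V)) V w (!c)) w u := hu
    clear hu
    induction hu' with
    | refl => exact Relation.ReflTransGen.refl
    | @tail x y hx hxy ih =>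
      obtain ⟨⟨d, hd | hd⟩, n2, n3, n4, n5⟩ := hxy
      · -- M-arrow (y, x, d)
        have hdM : (y, x, d) ∈ (G.mutate V).arr := hd
        rcases mem_mutate_iff.mp hdM with ⟨d₀, hd₀, c2, c3, c4, hγ⟩ | ⟨hyV, hr2⟩ |
          ⟨hr3, hb3⟩ | ⟨hxV, w', hw', ha'⟩
        · rcases region_step_in hG hre ih hd₀ with hyR | ⟨hxw, hdc⟩
          · exact hyR
          · exact absurd ⟨w, by rw [hdc]; exact hre, hxw⟩ c4
        · exfalso
          obtain ⟨hc', hw'⟩ := region_pin hG hre hr2 ih Relation.ReflTransGen.refl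
          exact n2 ⟨hw', hyV⟩
        · exfalso
          by_cases hxw : x = w
          · rw [hxw] at hb3
            exact not_opp hG hb3 hre.1
          · exact region_not_adj_V hG hre ih hxw ((arr_adj hG hb3).symm)
        · exact absurd hxV (region_ne_V hG hre ih)
      · -- M-arrow (x, y, d)
        have hdM : (x, y, d) ∈ (G.mutate V).arr := hd
        rcases mem_mutate_iff.mp hdM with ⟨d₀, hd₀, c2, c3, c4, hγ⟩ | ⟨hxV, hr2⟩ |
          ⟨hr3, hb3⟩ | ⟨hyV, w', hw', ha'⟩
        · rcases region_step_out hG hre ih hd₀ with hyR | ⟨hxw, hyV, -⟩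
          · exact hyR
          · exact absurd ⟨hxw, hyV⟩ n2
        · exact absurd hxV (region_ne_V hG hre ih)
        · exfalso
          obtain ⟨hc', hw'⟩ := region_pin hG hre hr3 ih Relation.ReflTransGen.refl
          refine n5 ⟨?_, hw'⟩
          show (x, y, !c) ∈ (G.mutate V).arr
          rw [← bool_swap hc'.symm]
          exact hd
        · exfalso
          rcases region_step_out hG hre ih ha' with hwR | ⟨-, hwV, -⟩
          · obtain ⟨hc', hw''⟩ := region_pin hG hre hw' hwR Relation.ReflTransGen.refl
            rw [hc', hw''] at ha'
            exact region_not_l hG hre ha' ih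
          · exact re_ne_V hG hw' hwV
  · intro u hu
    have hu' : Relation.ReflTransGen (adjAvoid G V w c) w u := hu
    clear hu
    induction hu' with
    | refl => exact Relation.ReflTransGen.refl
    | @tail x y hx hxy ih =>
      have hxR : x ∈ swapRegion G V w c := hx
      have hyR : y ∈ swapRegion G V w c := Relation.ReflTransGen.tail hx hxy
      have hxV : x ≠ V := region_ne_V hG hre hxR
      have hyV : y ≠ V := region_ne_V hG hre hyR
      have hfl : flips G V x y := ⟨c, w, hre, hxR, hyR⟩
      refine Relation.ReflTransGen.tail ih ⟨?_, ?_, ?_, ?_, ?_⟩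
      · obtain ⟨d, hd | hd⟩ := hxy.1
        · refine ⟨!d, Or.inr ?_⟩
          show (x, y, !d) ∈ (G.mutate V).arr
          have hc4 : ¬∃ w₀, re G V d w₀ ∧ y = w₀ := by
            rintro ⟨w₀, hw₀, hyw₀⟩
            obtain ⟨hc', hw''⟩ := region_pin hG hre hw₀ (hyw₀ ▸ hyR)
              Relation.ReflTransGen.refl
            refine hxy.2.2.2.1 ⟨?_, hyw₀.trans hw''⟩
            rw [← hc']
            exact hd
          have hm := mem_mutate_K1 hd (fun h => hyV h.1) (fun h => hxV h.1) hc4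
          rw [if_pos hfl] at hm
          exact hm
        · refine ⟨!d, Or.inl ?_⟩
          show (y, x, !d) ∈ (G.mutate V).arr
          have hc4 : ¬∃ w₀, re G V d w₀ ∧ x = w₀ := by
            rintro ⟨w₀, hw₀, hxw₀⟩
            obtain ⟨hc', hw''⟩ := region_pin hG hre hw₀ (hxw₀ ▸ hxR)
              Relation.ReflTransGen.refl
            refine hxy.2.2.2.2 ⟨?_, hxw₀.trans hw''⟩
            rw [← hc']
            exact hd
          have hm := mem_mutate_K1 hd (fun h => hxV h.1) (fun h => hyV h.1) hc4
          rw [if_pos (flips_symm hfl)] at hm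
          exact hm
      · rintro ⟨-, h⟩
        exact hyV h
      · rintro ⟨h, -⟩
        exact hxV h
      · rintro ⟨hmem, hyw⟩
        have hmem' : (y, x, !c) ∈ (G.mutate V).arr := hmem
        rw [hyw] at hmem'
        exact mutate_no_out_w hG hre hxR hmem'
      · rintro ⟨hmem, hxw⟩
        have hmem' : (x, y, !c) ∈ (G.mutate V).arr := hmem
        rw [hxw] at hmem'
        exact mutate_no_out_w hG hre hyR hmem'

lemma flips_rev_mutate (hG : G.IsGGTree) (a b : Fin n) :
    flips (rev (G.mutate V)) V a b ↔ flips G V a b := by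
  constructor
  · rintro ⟨γ, u, hreH, ha, hb⟩
    have hreG : re G V (!γ) u := (re_rev_mutate hG γ u).mp hreH
    have hregion := region_rev_mutate hG hreG
    rw [Bool.not_not] at hregion
    rw [hregion] at ha hb
    exact ⟨!γ, u, hreG, ha, hb⟩
  · rintro ⟨γ, u, hreG, ha, hb⟩
    have hreH : re (rev (G.mutate V)) V (!γ) u :=
      (re_rev_mutate hG (!γ) u).mpr (by rw [Bool.not_not]; exact hreG)
    have hregion := region_rev_mutate hG hreG
    rw [← hregion] at ha hb
    exact ⟨!γ, u, hreH, ha, hb⟩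

end RevMutate

end GCQuiver


namespace GCQuiver

open Classical SimpleGraph

variable {n : ℕ}

section Roundtrip

variable {G : GCQuiver n} {V : Fin n}

lemma roundtrip_key (hG : G.IsGGTree) : ∀ x y δ, (x, y, δ) ∈ G.arr →
    (y, x, δ) ∈ ((rev (G.mutate V)).mutate V).arr ∧
      ((rev (G.mutate V)).mutate V).deg (y, x, δ) = G.deg (x, y, δ) := by
  have hH : (rev (G.mutate V)).IsGGTree := rev_isGGTree (mutate_isGGTree hG)
  intro x y δ harr
  by_cases h1 : y = V ∧ re G V δ x
  · obtain ⟨hyV, hre⟩ := h1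
    have hreH : re (rev (G.mutate V)) V (!δ) x :=
      (re_rev_mutate hG (!δ) x).mpr (by rw [Bool.not_not]; exact hre)
    rw [hyV]
    refine ⟨mem_mutate_K2 hreH, ?_⟩
    rw [deg_mutate_K2 hreH]
    exact hre.2.symm
  by_cases h2 : x = V ∧ ∃ w, re G V (!δ) w
  · obtain ⟨hxV, w, hw⟩ := h2
    rw [hxV] at harr ⊢
    have hMmem : (w, y, δ) ∈ (G.mutate V).arr := mem_mutate_K3 hw harr
    have hHmem : (y, w, δ) ∈ (rev (G.mutate V)).arr := hMmem
    have hreH : re (rev (G.mutate V)) V δ w := (re_rev_mutate hG δ w).mpr hw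
    refine ⟨mem_mutate_K4 hreH hHmem, ?_⟩
    rw [deg_mutate_K4 hH hreH hHmem]
    show (G.mutate V).deg (w, y, δ) = G.deg (V, y, δ)
    exact deg_mutate_K3 hG hw harr
  by_cases h3 : ∃ w, re G V δ w ∧ y = w
  · obtain ⟨w, hw, hyw⟩ := h3
    rw [hyw] at harr ⊢
    have hMmem : (x, V, δ) ∈ (G.mutate V).arr := mem_mutate_K4 hw harr
    have hHmem : (V, x, δ) ∈ (rev (G.mutate V)).arr := hMmem
    have hreH : re (rev (G.mutate V)) V (!δ) w :=
      (re_rev_mutate hG (!δ) w).mpr (by rw [Bool.not_not]; exact hw)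
    refine ⟨mem_mutate_K3 hreH hHmem, ?_⟩
    rw [deg_mutate_K3 hH hreH hHmem]
    show (G.mutate V).deg (x, V, δ) = G.deg (x, w, δ)
    exact deg_mutate_K4 hG hw harr
  · have hMmem0 := mem_mutate_K1 harr h1 h2 h3
    by_cases hf : flips G V x y
    · rw [if_pos hf] at hMmem0
      have hH1 : (y, x, !δ) ∈ (rev (G.mutate V)).arr := hMmem0
      have hxV : x ≠ V := fun h => not_flips_V_left hG (h ▸ hf)
      have hyV : y ≠ V := fun h => not_flips_V_right hG (h ▸ hf)
      have hflH : flips (rev (G.mutate V)) V y x :=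
        (flips_rev_mutate hG y x).mpr (flips_symm hf)
      have hc4 : ¬∃ w', re (rev (G.mutate V)) V (!δ) w' ∧ x = w' := by
        rintro ⟨w', hw', hxw'⟩
        have hw'G : re G V δ w' := by
          have := (re_rev_mutate hG (!δ) w').mp hw'
          rwa [Bool.not_not] at this
        rw [hxw'] at harr
        exact hyV (hG.out_unique w' δ y V harr hw'G.1)
      have hmem := mem_mutate_K1 hH1 (fun h => hxV h.1) (fun h => hyV h.1) hc4
      rw [if_pos hflH, Bool.not_not] at hmem
      refine ⟨hmem, ?_⟩
      rw [deg_mutate_K1flip hH hflH hH1]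
      show (G.mutate V).deg (x, y, !δ) = G.deg (x, y, δ)
      have := deg_mutate_K1flip hG (γ := !δ) hf (by rw [Bool.not_not]; exact harr)
      rw [this, Bool.not_not]
    · rw [if_neg hf] at hMmem0
      have hH1 : (y, x, δ) ∈ (rev (G.mutate V)).arr := hMmem0
      have hflH' : ¬flips (rev (G.mutate V)) V y x :=
        fun h => hf (flips_symm ((flips_rev_mutate hG y x).mp h))
      by_cases hyV : y = V
      · have hnre : ¬re G V δ x := fun hre => h1 ⟨hyV, hre⟩
        rw [hyV] at harr hH1 ⊢
        have hxV : x ≠ V := arr_ne hG harr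
        have hnreH : ¬∃ w, re (rev (G.mutate V)) V (!δ) w := by
          rintro ⟨w, hw⟩
          have hwG : re G V δ w := by
            have := (re_rev_mutate hG (!δ) w).mp hw
            rwa [Bool.not_not] at this
          have : w = x := hG.in_unique V δ w x hwG.1 harr
          exact hnre (this ▸ hwG)
        have hc4 : ¬∃ w', re (rev (G.mutate V)) V δ w' ∧ x = w' := by
          rintro ⟨w', hw', hxw'⟩
          have hwG : re G V (!δ) w' := (re_rev_mutate hG δ w').mp hw'
          rw [hxw'] at harr
          exact bool_ne_not δ (color_unique hG harr hwG.1)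
        have hmem := mem_mutate_K1 hH1 (fun h => hxV h.1)
          (fun h => hnreH h.2) hc4
        rw [if_neg (not_flips_V_left hH)] at hmem
        refine ⟨hmem, ?_⟩
        rw [deg_mutate_K1out hH hH1 hnreH]
        have hnk4 : ¬∃ w, re G V δ w ∧ (x, w, δ) ∈ G.arr := by
          rintro ⟨w, hw, haw⟩
          have : V = w := hG.out_unique x δ V w harr haw
          exact hG.no_loop _ _ (this ▸ hw.1)
        have hMdeg : (G.mutate V).deg (x, V, δ) = G.deg (x, V, δ) - 1 :=
          deg_mutate_K1in hG harr hnk4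
        show (G.mutate V).deg (x, V, δ) + 1 = G.deg (x, V, δ)
        rw [hMdeg]
        have hd1 : G.deg (x, V, δ) ≠ 1 := fun hd => hnre ⟨harr, hd⟩
        have := hG.deg_pos _ harr
        omega
      · by_cases hxV : x = V
        · have hnre2 : ¬∃ w, re G V (!δ) w := fun ⟨w, hw⟩ => h2 ⟨hxV, w, hw⟩
          rw [hxV] at harr hH1 ⊢
          have hc2 : ¬(V = V ∧ re (rev (G.mutate V)) V δ y) := by
            rintro ⟨-, hre⟩
            exact hnre2 ⟨y, (re_rev_mutate hG δ y).mp hre⟩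
          have hc4 : ¬∃ w', re (rev (G.mutate V)) V δ w' ∧ V = w' := by
            rintro ⟨w', hw', hVw'⟩
            have hwG : re G V (!δ) w' := (re_rev_mutate hG δ w').mp hw'
            exact hG.no_loop _ _ ((hVw' ▸ hwG).1)
          have hmem := mem_mutate_K1 hH1 hc2 (fun h => hyV h.1) hc4
          rw [if_neg (not_flips_V_right hH)] at hmem
          refine ⟨hmem, ?_⟩
          have hnk4H : ¬∃ w, re (rev (G.mutate V)) V δ w ∧
              (y, w, δ) ∈ (rev (G.mutate V)).arr := by
            rintro ⟨w, hw, -⟩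
            exact hnre2 ⟨w, (re_rev_mutate hG δ w).mp hw⟩
          rw [deg_mutate_K1in hH hH1 hnk4H]
          show (G.mutate V).deg (V, y, δ) - 1 = G.deg (V, y, δ)
          rw [deg_mutate_K1out hG harr hnre2]
          omega
        · have hc4 : ¬∃ w', re (rev (G.mutate V)) V δ w' ∧ x = w' := by
            rintro ⟨w', hw', hxw'⟩
            have hwG : re G V (!δ) w' := (re_rev_mutate hG δ w').mp hw'
            rw [← hxw'] at hwG
            rcases region_step_out hG hwG Relation.ReflTransGen.refl harr with hyR |
              ⟨-, hyV', hδ⟩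
            · exact hf ⟨!δ, x, hwG, Relation.ReflTransGen.refl, hyR⟩
            · exact hyV hyV'
          have hmem := mem_mutate_K1 hH1 (fun h => hxV h.1) (fun h => hyV h.1) hc4
          rw [if_neg hflH'] at hmem
          refine ⟨hmem, ?_⟩
          rw [deg_mutate_K1gen hH hyV hxV hflH' hH1]
          show (G.mutate V).deg (x, y, δ) = G.deg (x, y, δ)
          exact deg_mutate_K1gen hG hxV hyV hf harr

/-- Mutating backwards (reverse, mutate, reverse) and then forwards recovers `G`. -/
lemma roundtrip (hG : G.IsGGTree) : ((rev (G.mutate V)).mutate V).Same (rev G) := by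
  have hH : (rev (G.mutate V)).IsGGTree := rev_isGGTree (mutate_isGGTree hG)
  have hsub : (rev G).arr ⊆ ((rev (G.mutate V)).mutate V).arr := by
    rintro ⟨a, b, γ⟩ hab
    exact (roundtrip_key hG b a γ hab).1
  have harr : (rev G).arr = ((rev (G.mutate V)).mutate V).arr := by
    apply Set.eq_of_subset_of_ncard_le hsub _ (Set.toFinite _)
    rw [(mutate_isGGTree hH).card_arr, (rev_isGGTree hG).card_arr]
  refine ⟨harr.symm, ?_⟩
  rintro ⟨a, b, γ⟩ hmem
  rw [← harr] at hmem
  exact (roundtrip_key hG b a γ hmem).2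

end Roundtrip

end GCQuiver

/-- **Statement 4.** The set of graded gentle trees with `n` vertices is closed under
forward and backward mutation: for any graded gentle tree `G` with `n` vertices and any
vertex `V`, the forward mutation `μ_V G` is again a graded gentle tree with `n` vertices,
and the backward mutation `μ_V⁻¹ G` exists, is unique (as a graded gentle tree, up to
the irrelevant values of the degree function away from the arrows), and is again a
graded gentle tree with `n` vertices. -/
theorem ggtree_closed_under_mutation (n : ℕ) (G : GCQuiver n) (hG : G.IsGGTree)
    (V : Fin n) :
    (G.mutate V).IsGGTree ∧
    (∃ G' : GCQuiver n, G'.IsGGTree ∧ (G'.mutate V).Same G) ∧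
    (∀ G' G'' : GCQuiver n, G'.IsGGTree → G''.IsGGTree →
      (G'.mutate V).Same G → (G''.mutate V).Same G → G'.Same G'') := by
  refine ⟨GCQuiver.mutate_isGGTree hG, ?_, ?_⟩
  · refine ⟨GCQuiver.rev ((GCQuiver.rev G).mutate V),
      GCQuiver.rev_isGGTree (GCQuiver.mutate_isGGTree (GCQuiver.rev_isGGTree hG)), ?_⟩
    have h := GCQuiver.roundtrip (V := V) (GCQuiver.rev_isGGTree hG)
    rwa [GCQuiver.rev_rev] at h
  · intro G' G'' hG' hG'' hs' hs''
    have key : ∀ K : GCQuiver n, K.IsGGTree → (K.mutate V).Same G →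
        ((GCQuiver.rev G).mutate V).Same (GCQuiver.rev K) := by
      intro K hK hs
      have h1 : (GCQuiver.rev (K.mutate V)).Same (GCQuiver.rev G) := GCQuiver.rev_same hs
      have h2 : ((GCQuiver.rev (K.mutate V)).mutate V).Same ((GCQuiver.rev G).mutate V) :=
        GCQuiver.mutate_same (GCQuiver.rev_isGGTree (GCQuiver.mutate_isGGTree hK)) h1
      have h3 := GCQuiver.roundtrip (V := V) hK
      exact GCQuiver.same_trans (GCQuiver.same_symm h2) h3
    have e' := key G' hG' hs'
    have e'' := key G'' hG'' hs''
    have h4 : (GCQuiver.rev G').Same (GCQuiver.rev G'') :=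
      GCQuiver.same_trans (GCQuiver.same_symm e') e''
    have h5 := GCQuiver.rev_same h4
    rwa [GCQuiver.rev_rev, GCQuiver.rev_rev] at h5
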